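/- arXiv:1607.03371 — 2 statements merged into one kernel-verified Lean document; each statement's English description precedes it below -/
import Mathlib

section
/- Let r ≥ 0 and k be integers with n = 2^{r+1} + 2, n ≡ k (mod 2^{r+2}), and 2^{r+1} + 2^r - 1 ≤ k ≤ 2^{r+2} - 2. Then r = 1, k = 6, and n = 6. -/
/-- Number-theoretic core: if `n = 2^(r+1) + 2`, `n ≡ k (mod 2^(r+2))` and
`2^(r+1) + 2^r - 1 ≤ k ≤ 2^(r+2) - 2`, then `r = 1`, `k = 6` and `n = 6`. -/
theorem stmt_7 (r k n : ℕ) (hn : n = 2 ^ (r + 1) + 2)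
    (hmod : (n : ℤ) ≡ (k : ℤ) [ZMOD (2 ^ (r + 2) : ℤ)])
    (hk1 : 2 ^ (r + 1) + 2 ^ r - 1 ≤ k) (hk2 : k ≤ 2 ^ (r + 2) - 2) :
    r = 1 ∧ k = 6 ∧ n = 6 := by
  have hd : ((2:ℤ) ^ (r + 2)) ∣ (k : ℤ) - n := Int.ModEq.dvd hmod
  match r with
  | 0 =>
    norm_num at hd hk1 hk2 hn
    omega
  | 1 =>
    norm_num at hd hk1 hk2 hn
    omega
  | (m + 2) =>
    exfalso
    obtain ⟨t, ht⟩ := hd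
    have e1 : 2 ^ (m + 2 + 1) = 8 * 2 ^ m := by ring
    have e2 : 2 ^ (m + 2 + 2) = 16 * 2 ^ m := by ring
    have e3 : 2 ^ (m + 2) = 4 * 2 ^ m := by ring
    have hP : 1 ≤ 2 ^ m := Nat.one_le_two_pow
    rw [e1, e3] at hk1
    rw [e2] at hk2
    rw [e1] at hn
    have ht' : (k : ℤ) - (n : ℤ) = 16 * (2:ℤ) ^ m * t := by
      rw [ht]; ring
    have hPZ : (1:ℤ) ≤ 2 ^ m := by exact_mod_cast hP
    have hk1' : 8 * 2 ^ m + 4 * 2 ^ m ≤ k + 1 := by omega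
    have hk2' : k + 2 ≤ 16 * 2 ^ m := by omega
    have hkZ : 8 * (2:ℤ)^m + 4 * 2^m ≤ (k:ℤ) + 1 := by exact_mod_cast hk1'
    have hkZ2 : (k : ℤ) + 2 ≤ 16 * 2^m := by exact_mod_cast hk2'
    have hnZ : (n : ℤ) = 8 * 2^m + 2 := by exact_mod_cast hn
    have ht1 : 1 ≤ t := by nlinarith
    nlinarith
end

section
/- Let G be a group acting linearly on a vector space V, let H ≤ G, and let U be an H-invariant subspace. Suppose that for every g ∈ G \ H: (a) g·U ≠ U, and (b) the action of the subgroup H ∩ gHg^{-1} on U is irreducible. Then the subspaces {g·U : g ∈ G} pairwise intersect in 0, and G permutes them transitively; in particular, if [G : H] is finite and equal to n, there are exactly n distinct subspaces g·U. -/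
/-- If `gU ≠ U` for all `g ∉ H` and `H ∩ gHg⁻¹` acts irreducibly on `U`, then the
translates `gU` pairwise intersect in `0`, `G` permutes them transitively, and their
number is the index of `H`. -/
theorem stmt_10 {K V G : Type*} [Field K] [AddCommGroup V] [Module K V] [Group G]
    (ρ : G →* (V ≃ₗ[K] V))
    (H : Subgroup G) (n : ℕ) (hn : H.index = n)
    (U : Submodule K V)
    (hUinv : ∀ h ∈ H, ∀ u ∈ U, ρ h u ∈ U)
    (ha : ∀ g : G, g ∉ H → Submodule.map (ρ g).toLinearMap U ≠ U)
    (hb : ∀ g : G, g ∉ H → ∀ W : Submodule K V, W ≤ U →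
      (∀ x : G, x ∈ H → g⁻¹ * x * g ∈ H → ∀ w ∈ W, ρ x w ∈ W) → W = ⊥ ∨ W = U) :
    (∀ g₁ g₂ : G,
      Submodule.map (ρ g₁).toLinearMap U ≠ Submodule.map (ρ g₂).toLinearMap U →
      Submodule.map (ρ g₁).toLinearMap U ⊓ Submodule.map (ρ g₂).toLinearMap U = ⊥) ∧
    (∀ W₁ ∈ {W : Submodule K V | ∃ g : G, W = Submodule.map (ρ g).toLinearMap U},
     ∀ W₂ ∈ {W : Submodule K V | ∃ g : G, W = Submodule.map (ρ g).toLinearMap U},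
      ∃ g : G, Submodule.map (ρ g).toLinearMap W₁ = W₂) ∧
    Nat.card {W : Submodule K V | ∃ g : G, W = Submodule.map (ρ g).toLinearMap U} = n := by
  have comp : ∀ g h : G, Submodule.map (ρ g).toLinearMap (Submodule.map (ρ h).toLinearMap U)
      = Submodule.map (ρ (g * h)).toLinearMap U := by
    intro g h
    rw [map_mul]
    exact (Submodule.map_comp (ρ h).toLinearMap (ρ g).toLinearMap U).symm
  have happ : ∀ (g h : G) (v : V), ρ g (ρ h v) = ρ (g * h) v := by
    intro g h v
    rw [map_mul]; rfl
  have hH : ∀ h ∈ H, Submodule.map (ρ h).toLinearMap U = U := by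
    intro h hh
    apply le_antisymm
    · rintro _ ⟨u, hu, rfl⟩; exact hUinv h hh u hu
    · intro u hu
      refine ⟨ρ h⁻¹ u, hUinv h⁻¹ (inv_mem hh) u hu, ?_⟩
      show ρ h (ρ h⁻¹ u) = u
      rw [happ, mul_inv_cancel, map_one]; rfl
  have key : ∀ g : G, g ∉ H → U ⊓ Submodule.map (ρ g).toLinearMap U = ⊥ := by
    intro g hg
    have hinvW : ∀ (a : G), ∀ x : G, x ∈ H → a⁻¹ * x * a ∈ H →
        ∀ w ∈ U ⊓ Submodule.map (ρ a).toLinearMap U, ρ x w ∈ U ⊓ Submodule.map (ρ a).toLinearMap U := by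
      intro a x hx hx' w hw
      obtain ⟨hw1, v, hv, rfl⟩ := hw
      refine ⟨hUinv x hx _ hw1, ρ (a⁻¹ * x * a) v, hUinv _ hx' v hv, ?_⟩
      show ρ a (ρ (a⁻¹ * x * a) v) = ρ x (ρ a v)
      rw [happ, happ]
      congr 1
      group
    have hle0 : U ⊓ Submodule.map (ρ g).toLinearMap U ≤ U := inf_le_left
    rcases hb g hg (U ⊓ Submodule.map (ρ g).toLinearMap U) hle0 (hinvW g) with h | h
    · exact h
    -- h : U ⊓ gU = U, i.e. U ≤ gU
    exfalso
    have hle : U ≤ Submodule.map (ρ g).toLinearMap U := h.ge.trans inf_le_right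
    have hle' : Submodule.map (ρ g⁻¹).toLinearMap U ≤ U := by
      have := Submodule.map_mono (f := (ρ g⁻¹).toLinearMap) hle
      rw [comp, inv_mul_cancel, map_one] at this
      simpa using this
    have hg' : g⁻¹ ∉ H := fun hh => hg (by simpa using inv_mem hh)
    have hinv2 : ∀ x : G, x ∈ H → (g⁻¹)⁻¹ * x * g⁻¹ ∈ H →
        ∀ w ∈ Submodule.map (ρ g⁻¹).toLinearMap U, ρ x w ∈ Submodule.map (ρ g⁻¹).toLinearMap U := by
      intro x hx hx' w hw
      obtain ⟨v, hv, rfl⟩ := hw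
      refine ⟨ρ ((g⁻¹)⁻¹ * x * g⁻¹) v, hUinv _ hx' v hv, ?_⟩
      show ρ g⁻¹ (ρ ((g⁻¹)⁻¹ * x * g⁻¹) v) = ρ x (ρ g⁻¹ v)
      rw [happ, happ]
      congr 1
      group
    rcases hb g⁻¹ hg' _ hle' hinv2 with h2 | h2
    · -- g⁻¹ U = ⊥ hence U = ⊥
      have : U = ⊥ := by
        have := congrArg (Submodule.map (ρ g).toLinearMap) h2
        rw [comp, mul_inv_cancel, map_one, Submodule.map_bot] at this
        simpa using this
      exact ha g hg (by rw [this, Submodule.map_bot])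
    · -- g⁻¹ U = U hence gU = U
      have := congrArg (Submodule.map (ρ g).toLinearMap) h2
      rw [comp, mul_inv_cancel, map_one] at this
      refine ha g hg ?_
      simpa using this.symm
  have fwd : ∀ g : G, Submodule.map (ρ g).toLinearMap U = U ↔ g ∈ H := by
    intro g
    constructor
    · intro h; by_contra hgn; exact ha g hgn h
    · exact hH g
  refine ⟨?_, ?_, ?_⟩
  · intro g₁ g₂ hne
    have hg : g₁⁻¹ * g₂ ∉ H := by
      intro hmem
      apply hne
      have := hH _ hmem
      have h2 := congrArg (Submodule.map (ρ g₁).toLinearMap) this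
      rw [comp] at h2
      rw [← h2]
      congr 2
      group
    have h0 := key _ hg
    have h1 := congrArg (Submodule.map (ρ g₁).toLinearMap) h0
    rw [Submodule.map_bot] at h1
    rw [Submodule.map_inf (ρ g₁).toLinearMap (ρ g₁).injective, comp] at h1
    rw [← h1]
    congr 3
    group
  · rintro W₁ ⟨g₁, rfl⟩ W₂ ⟨g₂, rfl⟩
    refine ⟨g₂ * g₁⁻¹, ?_⟩
    rw [comp]
    congr 2
    group
  · set S := {W : Submodule K V | ∃ g : G, W = Submodule.map (ρ g).toLinearMap U} with hS
    let f : G ⧸ H → S := Quotient.lift (fun g => (⟨Submodule.map (ρ g).toLinearMap U, g, rfl⟩ : S))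
      (by
        intro a b hab
        have hmem : a⁻¹ * b ∈ H := QuotientGroup.leftRel_apply.mp hab
        apply Subtype.ext
        show Submodule.map (ρ a).toLinearMap U = Submodule.map (ρ b).toLinearMap U
        have := congrArg (Submodule.map (ρ a).toLinearMap) (hH _ hmem)
        rw [comp] at this
        rw [← this]
        congr 2
        group)
    have hbij : Function.Bijective f := by
      constructor
      · intro x y
        induction x using Quotient.inductionOn with | _ a =>
        induction y using Quotient.inductionOn with | _ b =>
        intro hxy
        have heq : Submodule.map (ρ a).toLinearMap U = Submodule.map (ρ b).toLinearMap U :=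
          congrArg Subtype.val hxy
        have h2 := congrArg (Submodule.map (ρ a⁻¹).toLinearMap) heq
        rw [comp, comp, inv_mul_cancel, map_one] at h2
        have h3 : Submodule.map (ρ (a⁻¹ * b)).toLinearMap U = U := by
          rw [← h2]; simp
        have : a⁻¹ * b ∈ H := (fwd _).mp h3
        exact Quotient.sound (QuotientGroup.leftRel_apply.mpr this)
      · rintro ⟨W, g, rfl⟩
        exact ⟨⟦g⟧, rfl⟩
    rw [← hn, Subgroup.index]
    exact (Nat.card_congr (Equiv.ofBijective f hbij)).symm
end
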